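/- Let α, β > 0 and let λ ∈ ℂ be an eigenvalue of Γ_{α,β} = M_{α,β}⁻¹ N_{α,β} with eigenvector (x; y) ∈ ℂ^n × ℂ^m, (x; y) ≠ 0, such that Bx = 0. Then λ = (α‖x‖² − x*Ax)/(α‖x‖² + x*Ax); in particular λ is real and |λ| < 1, where x*Ax denotes the (real, positive) value of the Hermitian form of A at x and ‖x‖ is the Euclidean norm of x. -/

import Mathlib

open Matrix

private lemma aux_herm (k : ℕ) (M : Matrix (Fin k) (Fin k) ℝ) (hM : Mᵀ = M) (z : Fin k → ℂ) :
    star z ⬝ᵥ (M.map Complex.ofReal *ᵥ z)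
      = (((fun i => (z i).re) ⬝ᵥ (M *ᵥ fun i => (z i).re)
         + (fun i => (z i).im) ⬝ᵥ (M *ᵥ fun i => (z i).im) : ℝ) : ℂ) := by
  have hsym : ∀ i j, M i j = M j i := fun i j =>
    (congrFun (congrFun hM i) j : Mᵀ i j = M i j).symm.trans rfl
  have hLHS : star z ⬝ᵥ (M.map Complex.ofReal *ᵥ z)
      = ∑ i, ∑ j, (M i j : ℂ) * ((starRingEnd ℂ) (z i) * z j) := by
    simp only [dotProduct, mulVec, Pi.star_apply, map_apply, Finset.mul_sum]
    refine Finset.sum_congr rfl fun i _ => Finset.sum_congr rfl fun j _ => ?_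
    simp [RCLike.star_def]; ring
  rw [hLHS]
  have him : ∑ i, ∑ j, M i j * ((z i).re * (z j).im - (z i).im * (z j).re) = 0 := by
    set f : Fin k → Fin k → ℝ :=
      fun i j => M i j * ((z i).re * (z j).im - (z i).im * (z j).re) with hf
    have h1 : ∑ i, ∑ j, f i j = ∑ i, ∑ j, -(f j i) := by
      refine Finset.sum_congr rfl fun i _ => Finset.sum_congr rfl fun j _ => ?_
      simp only [hf]; rw [hsym i j]; ring
    have h2 : ∑ i, ∑ j, -(f j i) = -∑ i, ∑ j, f i j := by
      rw [Finset.sum_comm]; simp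
    have := h1.trans h2
    linarith
  apply Complex.ext
  · rw [Complex.re_sum]
    simp only [Complex.re_sum, Complex.mul_re, Complex.mul_im, Complex.ofReal_re,
      Complex.ofReal_im, Complex.conj_re, Complex.conj_im, Complex.add_re, Complex.ofReal_re]
    simp only [dotProduct, mulVec, Finset.mul_sum]
    rw [← Finset.sum_add_distrib]
    refine Finset.sum_congr rfl fun i _ => ?_
    rw [← Finset.sum_add_distrib]
    refine Finset.sum_congr rfl fun j _ => ?_
    ring
  · rw [Complex.im_sum]
    simp only [Complex.im_sum, Complex.mul_im, Complex.mul_re, Complex.ofReal_re,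
      Complex.ofReal_im, Complex.conj_re, Complex.conj_im, Complex.ofReal_im]
    refine Eq.trans ?_ him
    refine Finset.sum_congr rfl fun i _ => Finset.sum_congr rfl fun j _ => ?_
    ring

private lemma aux_parts_ne_zero (k : ℕ) (z : Fin k → ℂ) (hz : z ≠ 0) :
    (fun i => (z i).re) ≠ (0 : Fin k → ℝ) ∨ (fun i => (z i).im) ≠ (0 : Fin k → ℝ) := by
  by_contra h
  push_neg at h
  exact hz (funext fun i => Complex.ext (congrFun h.1 i) (congrFun h.2 i))

private lemma aux_posSemidef_form (k : ℕ) (M : Matrix (Fin k) (Fin k) ℝ) (hM : M.PosSemidef)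
    (z : Fin k → ℂ) : ∃ t : ℝ, 0 ≤ t ∧ star z ⬝ᵥ (M.map Complex.ofReal *ᵥ z) = (t : ℂ) := by
  have hMt : Mᵀ = M := by
    have h := hM.1
    rwa [Matrix.IsHermitian, conjTranspose_eq_transpose_of_trivial] at h
  refine ⟨_, ?_, aux_herm k M hMt z⟩
  have h1 := hM.dotProduct_mulVec_nonneg (fun i => (z i).re)
  have h2 := hM.dotProduct_mulVec_nonneg (fun i => (z i).im)
  simp only [star_trivial] at h1 h2
  linarith

private lemma aux_posDef_form (k : ℕ) (M : Matrix (Fin k) (Fin k) ℝ) (hM : M.PosDef)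
    (z : Fin k → ℂ) (hz : z ≠ 0) :
    ∃ t : ℝ, 0 < t ∧ star z ⬝ᵥ (M.map Complex.ofReal *ᵥ z) = (t : ℂ) := by
  have hMt : Mᵀ = M := by
    have h := hM.1
    rwa [Matrix.IsHermitian, conjTranspose_eq_transpose_of_trivial] at h
  refine ⟨_, ?_, aux_herm k M hMt z⟩
  rcases aux_parts_ne_zero k z hz with h | h
  · have h1 := hM.dotProduct_mulVec_pos h
    have h2 := hM.posSemidef.dotProduct_mulVec_nonneg (fun i => (z i).im)
    simp only [star_trivial] at h1 h2
    linarith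
  · have h1 := hM.posSemidef.dotProduct_mulVec_nonneg (fun i => (z i).re)
    have h2 := hM.dotProduct_mulVec_pos h
    simp only [star_trivial] at h1 h2
    linarith

private lemma aux_dot_self (k : ℕ) (z : Fin k → ℂ) (hz : z ≠ 0) :
    ∃ r : ℝ, 0 < r ∧ star z ⬝ᵥ z = (r : ℂ) := by
  refine ⟨∑ i, Complex.normSq (z i), ?_, ?_⟩
  · rcases lt_or_eq_of_le (Finset.sum_nonneg fun i _ => Complex.normSq_nonneg (z i)) with h | h
    · exact h
    · exfalso
      apply hz
      funext i
      have := (Finset.sum_eq_zero_iff_of_nonneg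
        (fun i _ => Complex.normSq_nonneg (z i))).mp h.symm i (Finset.mem_univ i)
      exact Complex.normSq_eq_zero.mp this
  · simp only [dotProduct, Pi.star_apply]
    push_cast
    refine Finset.sum_congr rfl fun i _ => ?_
    rw [Complex.star_def, mul_comm, Complex.mul_conj]

private lemma aux_star_mulVec (k l : ℕ) (M : Matrix (Fin k) (Fin l) ℝ) (z : Fin l → ℂ) :
    (M.map Complex.ofReal) *ᵥ star z = star ((M.map Complex.ofReal) *ᵥ z) := by
  funext i
  simp [Matrix.mulVec, dotProduct]

theorem eigenvalue_real_abs_lt_one_of_Bx_eq_zero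
    (n m : ℕ) (hn : 0 < n) (hm : 0 < m) (hmn : m ≤ n)
    (A : Matrix (Fin n) (Fin n) ℝ) (B : Matrix (Fin m) (Fin n) ℝ)
    (C : Matrix (Fin m) (Fin m) ℝ)
    (hA : A.PosDef) (hC : C.PosSemidef) (hB : B.rank = m)
    (α β : ℝ) (hα : 0 < α) (hβ : 0 < β)
    (M N : Matrix (Fin n ⊕ Fin m) (Fin n ⊕ Fin m) ℝ)
    (hM : M = (1/2 : ℝ) • Matrix.fromBlocks
      (α • (1 : Matrix (Fin n) (Fin n) ℝ) + A) Bᵀ (-B)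
      (β • (1 : Matrix (Fin m) (Fin m) ℝ) + C))
    (hN : N = (1/2 : ℝ) • Matrix.fromBlocks
      (α • (1 : Matrix (Fin n) (Fin n) ℝ) - A) (-Bᵀ) B
      (β • (1 : Matrix (Fin m) (Fin m) ℝ) - C))
    (lam : ℂ) (x : Fin n → ℂ) (y : Fin m → ℂ)
    (huv : Sum.elim x y ≠ 0)
    (heig : (N.map Complex.ofReal) *ᵥ Sum.elim x y
      = lam • ((M.map Complex.ofReal) *ᵥ Sum.elim x y))
    (hBx : (B.map Complex.ofReal) *ᵥ x = 0) :
    lam = ((α : ℂ) * (star x ⬝ᵥ x) - star x ⬝ᵥ ((A.map Complex.ofReal) *ᵥ x)) /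
          ((α : ℂ) * (star x ⬝ᵥ x) + star x ⬝ᵥ ((A.map Complex.ofReal) *ᵥ x)) ∧
    lam.im = 0 ∧ ‖lam‖ < 1 := by
  have hmapM : (M.map Complex.ofReal) = (1/2 : ℂ) • Matrix.fromBlocks
      ((α : ℂ) • 1 + A.map Complex.ofReal) (B.map Complex.ofReal)ᵀ
      (-(B.map Complex.ofReal)) ((β : ℂ) • 1 + C.map Complex.ofReal) := by
    subst hM
    ext (i | i) (j | j) <;>
      simp [Matrix.fromBlocks, Matrix.one_apply, Matrix.map_apply, apply_ite Complex.ofReal]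
  have hmapN : (N.map Complex.ofReal) = (1/2 : ℂ) • Matrix.fromBlocks
      ((α : ℂ) • 1 - A.map Complex.ofReal) (-(B.map Complex.ofReal)ᵀ)
      (B.map Complex.ofReal) ((β : ℂ) • 1 - C.map Complex.ofReal) := by
    subst hN
    ext (i | i) (j | j) <;>
      simp [Matrix.fromBlocks, Matrix.one_apply, Matrix.map_apply, apply_ite Complex.ofReal]
  rw [hmapM, hmapN, smul_mulVec, smul_mulVec, fromBlocks_mulVec,
    fromBlocks_mulVec] at heig
  have hrow1 : (α : ℂ) • x - (A.map Complex.ofReal) *ᵥ x - (B.map Complex.ofReal)ᵀ *ᵥ y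
      = lam • ((α : ℂ) • x + (A.map Complex.ofReal) *ᵥ x + (B.map Complex.ofReal)ᵀ *ᵥ y) := by
    funext i
    have h := congrFun heig (Sum.inl i)
    simp only [Pi.smul_apply, Sum.elim_inl, Sum.elim_comp_inl, Sum.elim_comp_inr, smul_eq_mul,
      Pi.add_apply, Pi.sub_apply, Pi.neg_apply, Matrix.sub_mulVec, Matrix.add_mulVec,
      Matrix.neg_mulVec, Matrix.smul_mulVec, Matrix.one_mulVec] at h ⊢
    linear_combination 2 * h
  have hrow2 : (B.map Complex.ofReal) *ᵥ x + ((β : ℂ) • y - (C.map Complex.ofReal) *ᵥ y)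
      = lam • (-((B.map Complex.ofReal) *ᵥ x)
        + ((β : ℂ) • y + (C.map Complex.ofReal) *ᵥ y)) := by
    funext i
    have h := congrFun heig (Sum.inr i)
    simp only [Pi.smul_apply, Sum.elim_inr, Sum.elim_comp_inl, Sum.elim_comp_inr, smul_eq_mul,
      Pi.add_apply, Pi.sub_apply, Pi.neg_apply, Matrix.sub_mulVec, Matrix.add_mulVec,
      Matrix.neg_mulVec, Matrix.smul_mulVec, Matrix.one_mulVec] at h ⊢
    linear_combination 2 * h
  -- x ≠ 0
  have hx : x ≠ 0 := by
    intro hx0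
    have hy : y ≠ 0 := by
      intro hy0
      apply huv
      funext i
      cases i with
      | inl i => rw [hx0]; rfl
      | inr i => rw [hy0]; rfl
    rw [hx0] at hrow1 hrow2
    simp only [Matrix.mulVec_zero, neg_zero, zero_add, smul_zero, zero_sub, sub_zero] at hrow1 hrow2
    -- hrow2 : β • y - C' *ᵥ y = lam • (β • y + C' *ᵥ y)
    obtain ⟨r, hr, hsy⟩ := aux_dot_self m y hy
    obtain ⟨t, ht, hqc⟩ := aux_posSemidef_form m C hC y
    have hd2 := congrArg (fun v => star y ⬝ᵥ v) hrow2
    simp only [dotProduct_sub, dotProduct_add, dotProduct_smul, smul_eq_mul, hsy, hqc] at hd2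
    have hden : (0 : ℝ) < β * r + t := by nlinarith [mul_pos hβ hr]
    have hdenC : ((β * r + t : ℝ) : ℂ) ≠ 0 := by
      exact_mod_cast hden.ne'
    have hlam : lam = (((β * r - t) / (β * r + t) : ℝ) : ℂ) := by
      rw [Complex.ofReal_div, eq_div_iff hdenC]
      push_cast
      linear_combination -hd2
    have h1lam : (1 : ℂ) + lam ≠ 0 := by
      rw [hlam]
      have key : (1 : ℝ) + (β * r - t) / (β * r + t) = 2 * (β * r) / (β * r + t) := by
        field_simp
        ring
      intro hcon
      have h0 : (1 : ℝ) + (β * r - t) / (β * r + t) = 0 := by exact_mod_cast hcon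
      rw [key] at h0
      have : (0 : ℝ) < 2 * (β * r) / (β * r + t) := by positivity
      linarith
    have hBty : (B.map Complex.ofReal)ᵀ *ᵥ y = 0 := by
      have hz : (1 + lam) • ((B.map Complex.ofReal)ᵀ *ᵥ y) = 0 := by
        rw [add_smul, one_smul, ← hrow1]
        simp
      rcases smul_eq_zero.mp hz with h | h
      · exact absurd h h1lam
      · exact h
    have hyre : Bᵀ *ᵥ (fun i => (y i).re) = 0 := by
      funext j
      have h := congrArg Complex.re (congrFun hBty j)
      simpa [Matrix.mulVec, dotProduct, Matrix.transpose_apply, Matrix.map_apply,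
        Complex.re_sum, Complex.re_ofReal_mul] using h
    have hyim : Bᵀ *ᵥ (fun i => (y i).im) = 0 := by
      funext j
      have h := congrArg Complex.im (congrFun hBty j)
      simpa [Matrix.mulVec, dotProduct, Matrix.transpose_apply, Matrix.map_apply,
        Complex.im_sum, Complex.im_ofReal_mul] using h
    have hli : LinearIndependent ℝ (fun i => B i) := by
      rw [linearIndependent_iff_card_eq_finrank_span]
      rw [Set.finrank, show (Set.range fun i => B i) = Set.range B.row from rfl,
        ← Matrix.rank_eq_finrank_span_row, hB, Fintype.card_fin]
    have hinj : Function.Injective B.vecMul := Matrix.vecMul_injective_iff.mpr hli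
    have hre0 : (fun i => (y i).re) = (0 : Fin m → ℝ) := by
      apply hinj
      show (fun i => (y i).re) ᵥ* B = (0 : Fin m → ℝ) ᵥ* B
      rw [← Matrix.mulVec_transpose, hyre, Matrix.zero_vecMul]
    have him0 : (fun i => (y i).im) = (0 : Fin m → ℝ) := by
      apply hinj
      show (fun i => (y i).im) ᵥ* B = (0 : Fin m → ℝ) ᵥ* B
      rw [← Matrix.mulVec_transpose, hyim, Matrix.zero_vecMul]
    exact hy (funext fun i => Complex.ext (congrFun hre0 i) (congrFun him0 i))
  -- main case
  obtain ⟨r, hr, hs⟩ := aux_dot_self n x hx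
  obtain ⟨t, ht, hq⟩ := aux_posDef_form n A hA x hx
  have hq0 : star x ⬝ᵥ ((B.map Complex.ofReal)ᵀ *ᵥ y) = 0 := by
    rw [Matrix.dotProduct_mulVec, Matrix.vecMul_transpose, aux_star_mulVec, hBx]
    simp
  have hd1 := congrArg (fun v => star x ⬝ᵥ v) hrow1
  simp only [dotProduct_sub, dotProduct_add, dotProduct_smul, smul_eq_mul, hq0, hs, hq,
    sub_zero, add_zero] at hd1
  -- hd1 : ↑α * ↑r - ↑t = lam * (↑α * ↑r + ↑t)
  have hden : (0 : ℝ) < α * r + t := by nlinarith [mul_pos hα hr]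
  have hdenC : ((α * r + t : ℝ) : ℂ) ≠ 0 := by exact_mod_cast hden.ne'
  have hlam : lam = (((α * r - t) / (α * r + t) : ℝ) : ℂ) := by
    rw [Complex.ofReal_div, eq_div_iff hdenC]
    push_cast
    linear_combination -hd1
  refine ⟨?_, ?_, ?_⟩
  · rw [hs, hq, hlam]
    push_cast
    ring
  · rw [hlam]; exact Complex.ofReal_im _
  · rw [hlam, Complex.norm_real, Real.norm_eq_abs, abs_div, abs_of_pos hden, div_lt_one hden, abs_sub_lt_iff]
    constructor <;> nlinarith [mul_pos hα hr]
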